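/- arXiv:1403.2520 — 6 statements merged into one kernel-verified Lean document; each statement's English description precedes it below -/
import Mathlib

section
/- If f : ℝ → ℝ is continuously differentiable, f and f′ are square integrable on ℝ, and f(x) → 0 as |x| → ∞, then sup_{x∈ℝ} |f(x)| ≤ √2 · ‖f‖_{L²(ℝ)}^{1/2} · ‖f′‖_{L²(ℝ)}^{1/2}. -/
open MeasureTheory Filter

/-- **Sobolev inequality on the line**: if `f` is continuously differentiable, `f` and `f'`
are square integrable and `f` vanishes at infinity, then
`sup |f| ≤ √2 ‖f‖_{L²}^{1/2} ‖f'‖_{L²}^{1/2}`. -/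
theorem sobolev_inequality_one_dim (f : ℝ → ℝ)
    (hf : ContDiff ℝ 1 f)
    (hf2 : Integrable (fun x => (f x) ^ 2))
    (hdf2 : Integrable (fun x => (deriv f x) ^ 2))
    (htop : Tendsto f atTop (nhds 0))
    (hbot : Tendsto f atBot (nhds 0)) :
    ∀ x : ℝ, |f x| ≤
      Real.sqrt 2 * (∫ y, (f y) ^ 2) ^ ((1 : ℝ) / 4) * (∫ y, (deriv f y) ^ 2) ^ ((1 : ℝ) / 4) := by
  intro x
  have hfc : Continuous f := hf.continuous
  have hdc : Continuous (deriv f) := hf.continuous_deriv le_rfl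
  set A := ∫ y, f y ^ 2 with hA_def
  set B := ∫ y, deriv f y ^ 2 with hB_def
  have hA : 0 ≤ A := integral_nonneg fun y => sq_nonneg _
  have hB : 0 ≤ B := integral_nonneg fun y => sq_nonneg _
  -- integrability of |f| * |f'|
  have hmul : Integrable (fun y => |f y| * |deriv f y|) := by
    refine Integrable.mono' (hf2.add hdf2) ?_ ?_
    · exact ((hfc.abs.mul hdc.abs)).aestronglyMeasurable
    · filter_upwards with y
      rw [Real.norm_eq_abs, abs_of_nonneg (mul_nonneg (abs_nonneg _) (abs_nonneg _))]
      simp only [Pi.add_apply]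
      nlinarith [sq_nonneg (|f y| - |deriv f y|), sq_abs (f y), sq_abs (deriv f y)]
  -- FTC: f x ^ 2 = ∫_{Iic x} 2 f f'
  have hderiv : ∀ y ∈ Set.Iic x, HasDerivAt (fun z => f z ^ 2)
      (2 * f y * deriv f y) y := by
    intro y _
    have h1 : HasDerivAt f (deriv f y) y := (hf.differentiable one_ne_zero y).hasDerivAt
    simpa [mul_comm, mul_assoc] using h1.fun_pow 2
  have hint : IntegrableOn (fun y => 2 * f y * deriv f y) (Set.Iic x) := by
    refine ((hmul.const_mul 2).mono' ?_ ?_).integrableOn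
    · exact ((continuous_const.mul hfc).mul hdc).aestronglyMeasurable
    · filter_upwards with y
      simp [Real.norm_eq_abs, abs_mul, mul_assoc]
  have htendsq : Tendsto (fun z => f z ^ 2) atBot (nhds 0) := by
    simpa using hbot.pow 2
  have hFTC : ∫ y in Set.Iic x, 2 * f y * deriv f y = f x ^ 2 := by
    rw [integral_Iic_of_hasDerivAt_of_tendsto' hderiv hint htendsq, sub_zero]
  -- bound by global integral of 2|f||f'|
  have hstep1 : f x ^ 2 ≤ ∫ y, 2 * (|f y| * |deriv f y|) := by
    rw [← hFTC]
    calc ∫ y in Set.Iic x, 2 * f y * deriv f y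
        ≤ ∫ y in Set.Iic x, 2 * (|f y| * |deriv f y|) := by
          refine setIntegral_mono_on hint ((hmul.const_mul 2).integrableOn)
            measurableSet_Iic fun y _ => ?_
          calc 2 * f y * deriv f y ≤ |2 * f y * deriv f y| := le_abs_self _
            _ = 2 * (|f y| * |deriv f y|) := by
                simp [abs_mul, mul_assoc]
      _ ≤ ∫ y, 2 * (|f y| * |deriv f y|) := by
          refine setIntegral_le_integral (hmul.const_mul 2) ?_
          filter_upwards with y
          positivity
  -- Cauchy-Schwarz
  have hmem1 : MemLp f 2 (volume : Measure ℝ) :=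
    (memLp_two_iff_integrable_sq hfc.aestronglyMeasurable).2 hf2
  have hmem2 : MemLp (deriv f) 2 (volume : Measure ℝ) :=
    (memLp_two_iff_integrable_sq hdc.aestronglyMeasurable).2 hdf2
  have hCS : ∫ y, |f y| * |deriv f y| ≤ A ^ ((1:ℝ)/2) * B ^ ((1:ℝ)/2) := by
    have h2 : (ENNReal.ofReal (2:ℝ)) = 2 := by norm_num
    have hpq : (2:ℝ).HolderConjugate 2 := by
      constructor <;> norm_num
    have := integral_mul_le_Lp_mul_Lq_of_nonneg (μ := volume) hpq
      (f := fun y => |f y|) (g := fun y => |deriv f y|)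
      (Filter.Eventually.of_forall fun y => abs_nonneg _)
      (Filter.Eventually.of_forall fun y => abs_nonneg _)
      (by rw [h2]; simpa [Real.norm_eq_abs] using hmem1.norm)
      (by rw [h2]; simpa [Real.norm_eq_abs] using hmem2.norm)
    calc ∫ y, |f y| * |deriv f y| ≤ (∫ y, |f y| ^ (2:ℝ)) ^ ((1:ℝ)/2) *
            (∫ y, |deriv f y| ^ (2:ℝ)) ^ ((1:ℝ)/2) := this
      _ = A ^ ((1:ℝ)/2) * B ^ ((1:ℝ)/2) := by
          congr 2
          · exact integral_congr_ae (Filter.Eventually.of_forall fun y => by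
              simp [Real.rpow_two, sq_abs])
          · exact integral_congr_ae (Filter.Eventually.of_forall fun y => by
              simp [Real.rpow_two, sq_abs])
  have hkey : f x ^ 2 ≤ 2 * (A ^ ((1:ℝ)/2) * B ^ ((1:ℝ)/2)) := by
    calc f x ^ 2 ≤ ∫ y, 2 * (|f y| * |deriv f y|) := hstep1
      _ = 2 * ∫ y, |f y| * |deriv f y| := by rw [integral_const_mul]
      _ ≤ 2 * (A ^ ((1:ℝ)/2) * B ^ ((1:ℝ)/2)) := by linarith [hCS]
  -- take square roots
  have hsq := Real.sqrt_le_sqrt hkey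
  rw [Real.sqrt_sq_eq_abs] at hsq
  refine hsq.trans_eq ?_
  rw [show (2 : ℝ) * (A ^ ((1:ℝ)/2) * B ^ ((1:ℝ)/2))
      = 2 * A ^ ((1:ℝ)/2) * B ^ ((1:ℝ)/2) by ring,
    Real.sqrt_mul (by positivity), Real.sqrt_mul (by norm_num),
    Real.sqrt_eq_rpow (A ^ ((1:ℝ)/2)), Real.sqrt_eq_rpow (B ^ ((1:ℝ)/2)),
    ← Real.rpow_mul hA, ← Real.rpow_mul hB]
  norm_num
end

section
/- Let w : [0,∞)×ℝ → ℝ be a twice continuously differentiable solution of the Burgers equation ∂ₜw + w∂ₓw = 0 with bounded first-order derivatives, and suppose ∂ₓw(0,x) > 0 for all x and M := sup_{x∈ℝ} ∂ₓw(0,x) < ∞. Then for every t > 0 and x ∈ ℝ, 0 < ∂ₓw(t,x) ≤ min{M, 1/t}. -/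
/-- Partial derivative in the time variable. -/
noncomputable def pt (f : ℝ → ℝ → ℝ) (t x : ℝ) : ℝ := deriv (fun s => f s x) t

/-- Partial derivative in the space variable. -/
noncomputable def px (f : ℝ → ℝ → ℝ) (t x : ℝ) : ℝ := deriv (fun y => f t y) x

open Set Filter

/-- The function `w` as a function on the product space. -/
private def Fw (w : ℝ → ℝ → ℝ) : ℝ × ℝ → ℝ := fun p => w p.1 p.2

private lemma hasDerivAt_slice1 {w : ℝ → ℝ → ℝ} {p : ℝ × ℝ} {L : ℝ × ℝ →L[ℝ] ℝ}
    (h : HasFDerivAt (Fw w) L p) :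
    HasDerivAt (fun s => w s p.2) (L (1, 0)) p.1 := by
  have h1 : HasDerivAt (fun s => ((s, p.2) : ℝ × ℝ)) ((1 : ℝ), (0 : ℝ)) p.1 :=
    (hasDerivAt_id p.1).prodMk (hasDerivAt_const p.1 p.2)
  have := h.comp_hasDerivAt_of_eq p.1 h1 (by simp)
  exact this

private lemma hasDerivAt_slice2 {w : ℝ → ℝ → ℝ} {p : ℝ × ℝ} {L : ℝ × ℝ →L[ℝ] ℝ}
    (h : HasFDerivAt (Fw w) L p) :
    HasDerivAt (fun z => w p.1 z) (L (0, 1)) p.2 := by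
  have h1 : HasDerivAt (fun z => ((p.1, z) : ℝ × ℝ)) ((0 : ℝ), (1 : ℝ)) p.2 :=
    (hasDerivAt_const p.2 p.1).prodMk (hasDerivAt_id p.2)
  have := h.comp_hasDerivAt_of_eq p.2 h1 (by simp)
  exact this

private lemma interior_cda {w : ℝ → ℝ → ℝ}
    (hsmooth : ContDiffOn ℝ 2 (Fw w) (Set.Ici 0 ×ˢ Set.univ)) {p : ℝ × ℝ} (hp : 0 < p.1) :
    ContDiffAt ℝ 2 (Fw w) p :=
  hsmooth.contDiffAt (prod_mem_nhds (Ici_mem_nhds hp) univ_mem)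

private lemma eventually_hasFDerivAt {w : ℝ → ℝ → ℝ}
    (hsmooth : ContDiffOn ℝ 2 (Fw w) (Set.Ici 0 ×ˢ Set.univ)) {p₀ : ℝ × ℝ} (hp : 0 < p₀.1) :
    ∀ᶠ p in nhds p₀, HasFDerivAt (Fw w) (fderiv ℝ (Fw w) p) p := by
  have h := (interior_cda hsmooth hp).eventually (by norm_num)
  filter_upwards [h] with p hp2 using (hp2.differentiableAt (by norm_num)).hasFDerivAt

/-- Transport derivative along a straight line, for interior times. -/
private lemma transport {w : ℝ → ℝ → ℝ}
    (hsmooth : ContDiffOn ℝ 2 (Fw w) (Set.Ici 0 ×ˢ Set.univ))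
    (hburgers : ∀ t x : ℝ, 0 ≤ t → pt w t x + w t x * px w t x = 0)
    {y c s₀ : ℝ} (hs₀ : 0 < s₀) :
    HasDerivAt (fun s => w s (y + s * c))
      ((c - w s₀ (y + s₀ * c)) * px w s₀ (y + s₀ * c)) s₀ := by
  set G := fderiv ℝ (Fw w) with hG
  have hFd : HasFDerivAt (Fw w) (G (s₀, y + s₀ * c)) (s₀, y + s₀ * c) :=
    (eventually_hasFDerivAt hsmooth (show (0:ℝ) < (s₀, y + s₀*c).1 from hs₀)).self_of_nhds
  have hγ2 : HasDerivAt (fun s => y + s * c) c s₀ := by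
    simpa using ((hasDerivAt_id s₀).mul_const c).const_add y
  have hγ : HasDerivAt (fun s => ((s, y + s * c) : ℝ × ℝ)) ((1 : ℝ), c) s₀ :=
    (hasDerivAt_id s₀).prodMk hγ2
  have hw : HasDerivAt (fun s => w s (y + s * c)) (G (s₀, y + s₀ * c) (1, c)) s₀ := by
    have := hFd.comp_hasDerivAt_of_eq s₀ hγ rfl
    exact this
  have e1 : pt w s₀ (y + s₀ * c) = G (s₀, y + s₀ * c) (1, 0) := by
    simp only [pt]; exact (hasDerivAt_slice1 hFd).deriv
  have e2 : px w s₀ (y + s₀ * c) = G (s₀, y + s₀ * c) (0, 1) := by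
    simp only [px]; exact (hasDerivAt_slice2 hFd).deriv
  have hb := hburgers s₀ (y + s₀ * c) hs₀.le
  have hlin : ((1 : ℝ), c) = ((1 : ℝ), (0 : ℝ)) + c • ((0 : ℝ), (1 : ℝ)) := by
    simp [Prod.ext_iff]
  have hval : G (s₀, y + s₀ * c) (1, c)
      = (c - w s₀ (y + s₀ * c)) * px w s₀ (y + s₀ * c) := by
    rw [hlin, map_add, map_smul, smul_eq_mul, ← e1, ← e2]
    linarith [hb]
  rwa [hval] at hw

/-- The Riccati equation for the space derivative along a characteristic line. -/
private lemma riccati {w : ℝ → ℝ → ℝ}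
    (hsmooth : ContDiffOn ℝ 2 (Fw w) (Set.Ici 0 ×ˢ Set.univ))
    (hburgers : ∀ t x : ℝ, 0 ≤ t → pt w t x + w t x * px w t x = 0)
    {y c s₀ : ℝ} (hs₀ : 0 < s₀) (hc : w s₀ (y + s₀ * c) = c) :
    HasDerivAt (fun s => px w s (y + s * c)) (-(px w s₀ (y + s₀ * c))^2) s₀ := by
  set G := fderiv ℝ (Fw w) with hGdef
  have hp₀ : (0:ℝ) < ((s₀, y + s₀ * c) : ℝ × ℝ).1 := hs₀
  have hC : ContDiffAt ℝ 2 (Fw w) (s₀, y + s₀ * c) := interior_cda hsmooth hp₀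
  have hGc : ContDiffAt ℝ 1 G (s₀, y + s₀ * c) := hC.fderiv_right (by norm_num)
  have hB : HasFDerivAt G (fderiv ℝ G (s₀, y + s₀ * c)) (s₀, y + s₀ * c) :=
    (hGc.differentiableAt one_ne_zero).hasFDerivAt
  set B := fderiv ℝ G (s₀, y + s₀ * c) with hBdef
  have hev : ∀ᶠ p in nhds ((s₀, y + s₀ * c) : ℝ × ℝ), HasFDerivAt (Fw w) (G p) p :=
    eventually_hasFDerivAt hsmooth hp₀
  have hsymm : ∀ u v : ℝ × ℝ, B u v = B v u := fun u v =>
    second_derivative_symmetric_of_eventually hev hB u v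
  have hγ2 : HasDerivAt (fun s => y + s * c) c s₀ := by
    simpa using ((hasDerivAt_id s₀).mul_const c).const_add y
  have hγ : HasDerivAt (fun s => ((s, y + s * c) : ℝ × ℝ)) ((1 : ℝ), c) s₀ :=
    (hasDerivAt_id s₀).prodMk hγ2
  have hGγ : HasDerivAt (fun s => G (s, y + s * c)) (B (1, c)) s₀ :=
    hB.comp_hasDerivAt_of_eq s₀ hγ rfl
  have hq : HasDerivAt (fun s => G (s, y + s * c) (0, 1)) (B (1, c) (0, 1)) s₀ := by
    have := hGγ.clm_apply (hasDerivAt_const s₀ ((0 : ℝ), (1 : ℝ)))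
    simpa using this
  -- the differentiated Burgers equation
  have hFd : HasFDerivAt (Fw w) (G (s₀, y + s₀ * c)) (s₀, y + s₀ * c) := hev.self_of_nhds
  have hopen : ∀ᶠ p in nhds ((s₀, y + s₀ * c) : ℝ × ℝ), 0 < p.1 := by
    have : Set.Ioi (0:ℝ) ×ˢ Set.univ ∈ nhds ((s₀, y + s₀ * c) : ℝ × ℝ) :=
      prod_mem_nhds (Ioi_mem_nhds hs₀) univ_mem
    filter_upwards [this] with p hp using hp.1
  have hE0 : (fun p : ℝ × ℝ => G p (1, 0) + Fw w p * G p (0, 1))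
      =ᶠ[nhds ((s₀, y + s₀ * c) : ℝ × ℝ)] fun _ => 0 := by
    filter_upwards [hev, hopen] with p hp hp1
    have e1 : pt w p.1 p.2 = G p (1, 0) := by
      simp only [pt]; exact (hasDerivAt_slice1 hp).deriv
    have e2 : px w p.1 p.2 = G p (0, 1) := by
      simp only [px]; exact (hasDerivAt_slice2 hp).deriv
    have hb := hburgers p.1 p.2 hp1.le
    rw [e1, e2] at hb
    simpa [Fw] using hb
  have hzero : HasFDerivAt (fun p : ℝ × ℝ => G p (1, 0) + Fw w p * G p (0, 1))
      (0 : ℝ × ℝ →L[ℝ] ℝ) (s₀, y + s₀ * c) :=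
    (hasFDerivAt_const (0:ℝ) _).congr_of_eventuallyEq hE0
  have hE' : HasFDerivAt (fun p : ℝ × ℝ => G p (1, 0) + Fw w p * G p (0, 1))
      (((G (s₀, y + s₀ * c)).comp (0 : ℝ × ℝ →L[ℝ] ℝ × ℝ) + B.flip (1, 0))
        + (Fw w (s₀, y + s₀ * c) • ((G (s₀, y + s₀ * c)).comp (0 : ℝ × ℝ →L[ℝ] ℝ × ℝ)
            + B.flip (0, 1))
          + (G (s₀, y + s₀ * c) (0, 1)) • G (s₀, y + s₀ * c))) (s₀, y + s₀ * c) :=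
    (hB.clm_apply (hasFDerivAt_const _ _)).add
      (hFd.mul (hB.clm_apply (hasFDerivAt_const _ _)))
  have hkey := hE'.unique hzero
  have hkey2 : B (0, 1) (1, 0)
      + (Fw w (s₀, y + s₀ * c) * B (0, 1) (0, 1)
        + G (s₀, y + s₀ * c) (0, 1) * G (s₀, y + s₀ * c) (0, 1)) = 0 := by
    have := congrArg (fun L : ℝ × ℝ →L[ℝ] ℝ => L (0, 1)) hkey
    simpa [ContinuousLinearMap.add_apply, ContinuousLinearMap.comp_apply,
      ContinuousLinearMap.flip_apply, ContinuousLinearMap.smul_apply, smul_eq_mul,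
      mul_comm] using this
  have e2 : px w s₀ (y + s₀ * c) = G (s₀, y + s₀ * c) (0, 1) := by
    simp only [px]; exact (hasDerivAt_slice2 hFd).deriv
  have hFWc : Fw w (s₀, y + s₀ * c) = c := hc
  have hlin : ((1 : ℝ), c) = ((1 : ℝ), (0 : ℝ)) + c • ((0 : ℝ), (1 : ℝ)) := by
    simp [Prod.ext_iff]
  have hval : B (1, c) (0, 1) = -(px w s₀ (y + s₀ * c))^2 := by
    rw [hsymm (1, c) (0, 1), hlin, map_add, map_smul, smul_eq_mul, e2]
    rw [hFWc] at hkey2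
    linear_combination hkey2
  rw [hval] at hq
  -- transfer from the G-form to the px-form
  have hγt : Tendsto (fun s => ((s, y + s * c) : ℝ × ℝ)) (nhds s₀)
      (nhds ((s₀, y + s₀ * c) : ℝ × ℝ)) := hγ.continuousAt
  have hevq : (fun s => px w s (y + s * c)) =ᶠ[nhds s₀]
      (fun s => G (s, y + s * c) (0, 1)) := by
    filter_upwards [hγt.eventually hev] with s hs
    simp only [px]
    exact (hasDerivAt_slice2 hs).deriv
  exact hq.congr_of_eventuallyEq hevq

/-- Grönwall-type lemma: a continuous function on `[0,T]` vanishing at `0` whose derivative on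
`(0,T)` is dominated by `K` times the function is identically zero. -/
private lemma gronwall_zero {f d : ℝ → ℝ} {K T : ℝ} (hK : 0 ≤ K)
    (hc : ContinuousOn f (Set.Icc 0 T)) (h0 : f 0 = 0)
    (hd : ∀ s ∈ Set.Ioo 0 T, HasDerivAt f (d s) s)
    (hb : ∀ s ∈ Set.Ioo 0 T, |d s| ≤ K * |f s|) :
    ∀ s ∈ Set.Icc 0 T, f s = 0 := by
  intro s hs
  rcases eq_or_lt_of_le hs.1 with h | h
  · rw [← h]; exact h0
  have key : ∀ δ ∈ Set.Ioo 0 s, |f s| ≤ |f δ| * Real.exp (K * s) := by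
    intro δ hδ
    have hsub : Set.Icc δ s ⊆ Set.Icc 0 T := Set.Icc_subset_Icc hδ.1.le hs.2
    have hder : ∀ z ∈ Set.Ico δ s, HasDerivWithinAt f (d z) (Set.Ici z) z := by
      intro z hz
      exact (hd z ⟨lt_of_lt_of_le hδ.1 hz.1, lt_of_lt_of_le hz.2 hs.2⟩).hasDerivWithinAt
    have hbound : ∀ z ∈ Set.Ico δ s, ‖d z‖ ≤ K * ‖f z‖ + 0 := by
      intro z hz
      have := hb z ⟨lt_of_lt_of_le hδ.1 hz.1, lt_of_lt_of_le hz.2 hs.2⟩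
      simpa [Real.norm_eq_abs] using this
    have := norm_le_gronwallBound_of_norm_deriv_right_le (hc.mono hsub) hder le_rfl hbound
      s ⟨hδ.2.le, le_rfl⟩
    rw [gronwallBound_ε0] at this
    rw [Real.norm_eq_abs, Real.norm_eq_abs] at this
    refine this.trans ?_
    have hexp : Real.exp (K * (s - δ)) ≤ Real.exp (K * s) :=
      Real.exp_le_exp.mpr (by nlinarith [hδ.1])
    exact mul_le_mul_of_nonneg_left hexp (abs_nonneg _)
  have hne : (nhdsWithin (0:ℝ) (Set.Ioo 0 s)).NeBot := by
    apply mem_closure_iff_nhdsWithin_neBot.mp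
    rw [closure_Ioo h.ne]
    exact ⟨le_rfl, h.le⟩
  have hcw : ContinuousWithinAt f (Set.Ioo 0 s) 0 := by
    apply (hc 0 ⟨le_rfl, le_trans h.le hs.2⟩).mono
    exact Set.Ioo_subset_Icc_self.trans (Set.Icc_subset_Icc le_rfl hs.2)
  have hlim : Tendsto (fun δ => |f δ| * Real.exp (K * s)) (nhdsWithin 0 (Set.Ioo 0 s))
      (nhds 0) := by
    have h1 := hcw.tendsto
    rw [h0] at h1
    have := (h1.abs.mul_const (Real.exp (K * s)))
    simpa using this
  have hfinal : |f s| ≤ 0 := by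
    apply ge_of_tendsto hlim
    filter_upwards [eventually_mem_nhdsWithin] with δ hδ using key δ hδ
  exact abs_eq_zero.mp (le_antisymm hfinal (abs_nonneg _))

/-- The slice in the space variable is differentiable, with derivative the within-fderiv. -/
private lemma slice_px_within {w : ℝ → ℝ → ℝ}
    (hsmooth : ContDiffOn ℝ 2 (Fw w) (Set.Ici 0 ×ˢ Set.univ)) {t : ℝ} (ht : 0 ≤ t) (z : ℝ) :
    HasDerivAt (fun y => w t y)
      (fderivWithin ℝ (Fw w) (Set.Ici 0 ×ˢ Set.univ) (t, z) (0, 1)) z := by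
  have hd : DifferentiableWithinAt ℝ (Fw w) (Set.Ici 0 ×ˢ Set.univ) (t, z) :=
    (hsmooth.differentiableOn (by norm_num)) (t, z) ⟨ht, trivial⟩
  have hι : HasDerivWithinAt (fun y => ((t, y) : ℝ × ℝ)) ((0 : ℝ), (1 : ℝ)) Set.univ z :=
    ((hasDerivAt_const z t).prodMk (hasDerivAt_id z)).hasDerivWithinAt
  have := hd.hasFDerivWithinAt.comp_hasDerivWithinAt z hι (fun y _ => ⟨ht, trivial⟩)
  rw [hasDerivWithinAt_univ] at this
  exact this

private lemma px_eq_within {w : ℝ → ℝ → ℝ}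
    (hsmooth : ContDiffOn ℝ 2 (Fw w) (Set.Ici 0 ×ˢ Set.univ)) {t : ℝ} (ht : 0 ≤ t) (z : ℝ) :
    px w t z = fderivWithin ℝ (Fw w) (Set.Ici 0 ×ˢ Set.univ) (t, z) (0, 1) := by
  simp only [px]
  exact (slice_px_within hsmooth ht z).deriv

/-- Continuity of `s ↦ px w s (y + s c)` on `[0, T]`. -/
private lemma qcont {w : ℝ → ℝ → ℝ}
    (hsmooth : ContDiffOn ℝ 2 (Fw w) (Set.Ici 0 ×ˢ Set.univ)) (y c T : ℝ) :
    ContinuousOn (fun s => px w s (y + s * c)) (Set.Icc 0 T) := by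
  have hU : UniqueDiffOn ℝ (Set.Ici (0:ℝ) ×ˢ (Set.univ : Set ℝ)) :=
    (uniqueDiffOn_Ici 0).prod uniqueDiffOn_univ
  have hGc : ContinuousOn (fderivWithin ℝ (Fw w) (Set.Ici 0 ×ˢ Set.univ))
      (Set.Ici 0 ×ˢ Set.univ) := hsmooth.continuousOn_fderivWithin hU (by norm_num)
  have hγ : ContinuousOn (fun s => ((s, y + s * c) : ℝ × ℝ)) (Set.Icc 0 T) := by fun_prop
  have hmaps : ∀ s ∈ Set.Icc (0:ℝ) T, ((s, y + s * c) : ℝ × ℝ) ∈ Set.Ici (0:ℝ) ×ˢ Set.univ :=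
    fun s hs => ⟨hs.1, trivial⟩
  have h1 : ContinuousOn
      (fun s => fderivWithin ℝ (Fw w) (Set.Ici 0 ×ˢ Set.univ) (s, y + s * c)) (Set.Icc 0 T) :=
    hGc.comp hγ hmaps
  have h2 : ContinuousOn
      (fun s => fderivWithin ℝ (Fw w) (Set.Ici 0 ×ˢ Set.univ) (s, y + s * c) (0, 1))
      (Set.Icc 0 T) := h1.clm_apply continuousOn_const
  apply h2.congr
  intro s hs
  exact px_eq_within hsmooth hs.1 (y + s * c)

/-- Continuity of `s ↦ w s (y + s c)` on `[0, T]`. -/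
private lemma wcont {w : ℝ → ℝ → ℝ}
    (hsmooth : ContDiffOn ℝ 2 (Fw w) (Set.Ici 0 ×ˢ Set.univ)) (y c T : ℝ) :
    ContinuousOn (fun s => w s (y + s * c)) (Set.Icc 0 T) := by
  have hγ : ContinuousOn (fun s => ((s, y + s * c) : ℝ × ℝ)) (Set.Icc 0 T) := by fun_prop
  have hmaps : ∀ s ∈ Set.Icc (0:ℝ) T, ((s, y + s * c) : ℝ × ℝ) ∈ Set.Ici (0:ℝ) ×ˢ Set.univ :=
    fun s hs => ⟨hs.1, trivial⟩
  exact (hsmooth.continuousOn.comp hγ hmaps : _)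

/-- For a C² solution `w` of the Burgers equation on `[0,∞)×ℝ` with bounded first-order
derivatives, if `∂ₓw(0,·) > 0` with upper bound `M`, then `0 < ∂ₓw(t,x) ≤ min{M, 1/t}`
for all `t > 0`. -/
theorem burgers_gradient_decay (w : ℝ → ℝ → ℝ)
    (hsmooth : ContDiffOn ℝ 2 (fun p : ℝ × ℝ => w p.1 p.2) (Set.Ici 0 ×ˢ Set.univ))
    (hbdd : ∃ K : ℝ, ∀ t x : ℝ, 0 ≤ t → |pt w t x| ≤ K ∧ |px w t x| ≤ K)
    (hburgers : ∀ t x : ℝ, 0 ≤ t → pt w t x + w t x * px w t x = 0)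
    (M : ℝ)
    (hpos : ∀ x : ℝ, 0 < px w 0 x)
    (hM : ∀ x : ℝ, px w 0 x ≤ M) :
    ∀ t x : ℝ, 0 < t → 0 < px w t x ∧ px w t x ≤ min M (1 / t) := by
  have hsmooth' : ContDiffOn ℝ 2 (Fw w) (Set.Ici 0 ×ˢ Set.univ) := hsmooth
  intro t x ht
  obtain ⟨K, hK⟩ := hbdd
  have hK0 : 0 ≤ K := le_trans (abs_nonneg _) (hK 0 0 le_rfl).2
  -- derivative of the initial slice
  have hw0 : ∀ z : ℝ, HasDerivAt (fun y => w 0 y) (px w 0 z) z := by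
    intro z
    have h := slice_px_within hsmooth' le_rfl z
    rwa [← px_eq_within hsmooth' le_rfl z] at h
  -- find the foot of the characteristic through (t, x)
  set φ : ℝ → ℝ := fun z => z + t * w 0 z with hφdef
  have hφd : ∀ z : ℝ, HasDerivAt φ (1 + t * px w 0 z) z := fun z =>
    (hasDerivAt_id z).add ((hw0 z).const_mul t)
  have hmono : Monotone (fun z => t * w 0 z) := by
    apply monotone_of_deriv_nonneg
    · exact fun z => ((hw0 z).const_mul t).differentiableAt
    · intro z
      rw [((hw0 z).const_mul t).deriv]
      exact mul_nonneg ht.le (hpos z).le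
  set A : ℝ := min 0 (x - φ 0) with hA
  set B : ℝ := max 0 (x - φ 0) with hB
  have hAB : A ≤ B := le_trans (min_le_left _ _) (le_max_left _ _)
  have hφA : φ A ≤ x := by
    have h1 : t * w 0 A ≤ t * w 0 0 := hmono (min_le_left _ _)
    have h2 : A ≤ x - φ 0 := min_le_right _ _
    simp only [hφdef] at *
    linarith
  have hφB : x ≤ φ B := by
    have h1 : t * w 0 0 ≤ t * w 0 B := hmono (le_max_left _ _)
    have h2 : x - φ 0 ≤ B := le_max_right _ _
    simp only [hφdef] at *
    linarith
  have hφc : ContinuousOn φ (Set.Icc A B) :=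
    (Continuous.continuousOn (by
      have : Differentiable ℝ φ := fun z => (hφd z).differentiableAt
      exact this.continuous))
  obtain ⟨y, -, hy⟩ := intermediate_value_Icc hAB hφc ⟨hφA, hφB⟩
  set c : ℝ := w 0 y with hc
  set a : ℝ := px w 0 y with ha
  have ha0 : 0 < a := hpos y
  have haM : a ≤ M := hM y
  have hyx : y + t * c = x := hy
  -- Step 1: w is constant along the line s ↦ (s, y + s c)
  have hg0 : ∀ s ∈ Set.Icc 0 t, w s (y + s * c) - c = 0 := by
    apply gronwall_zero hK0
    · exact (wcont hsmooth' y c t).sub continuousOn_const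
    · simp [hc]
    · intro s hs
      exact (transport hsmooth' hburgers hs.1).sub_const c
    · intro s hs
      have hb := (hK s (y + s * c) hs.1.le).2
      have : |(c - w s (y + s * c)) * px w s (y + s * c)|
          = |w s (y + s * c) - c| * |px w s (y + s * c)| := by
        rw [← abs_mul, show (c - w s (y + s * c)) * px w s (y + s * c)
          = -((w s (y + s * c) - c) * px w s (y + s * c)) from by ring, abs_neg]
      rw [this]
      calc |w s (y + s * c) - c| * |px w s (y + s * c)|
          ≤ |w s (y + s * c) - c| * K := by
            exact mul_le_mul_of_nonneg_left hb (abs_nonneg _)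
        _ = K * |w s (y + s * c) - c| := mul_comm _ _
  have hconst : ∀ s ∈ Set.Icc 0 t, w s (y + s * c) = c := by
    intro s hs
    have := hg0 s hs
    linarith
  -- Step 2: the Riccati equation forces px w s (y + s c) = a / (1 + a s)
  set q : ℝ → ℝ := fun s => px w s (y + s * c) with hq
  have hq0 : q 0 = a := by simp [hq, ha]
  have hqd : ∀ s ∈ Set.Ioo 0 t, HasDerivAt q (-(q s)^2) s := by
    intro s hs
    exact riccati hsmooth' hburgers hs.1 (hconst s ⟨hs.1.le, hs.2.le⟩)
  have hP0 : ∀ s ∈ Set.Icc 0 t, (1 + a * s) * q s - a = 0 := by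
    have hlc : ContinuousOn (fun s : ℝ => 1 + a * s) (Set.Icc 0 t) := by fun_prop
    refine gronwall_zero (d := fun s => a * q s + (1 + a * s) * -(q s)^2) hK0
      ((hlc.mul (qcont hsmooth' y c t)).sub continuousOn_const) (by simp [hq0]) ?_ ?_
    · intro s hs
      have h1 : HasDerivAt (fun s : ℝ => 1 + a * s) a s := by
        simpa using ((hasDerivAt_id s).const_mul a).const_add 1
      exact (h1.mul (hqd s hs)).sub_const a
    · intro s hs
      have hb : |q s| ≤ K := (hK s (y + s * c) hs.1.le).2
      have heq : |a * q s + (1 + a * s) * -(q s)^2| = |q s| * |(1 + a * s) * q s - a| := by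
        rw [← abs_mul, show a * q s + (1 + a * s) * -(q s)^2
          = -(q s * ((1 + a * s) * q s - a)) from by ring, abs_neg]
      rw [heq]
      exact mul_le_mul_of_nonneg_right hb (abs_nonneg _)
  have h1at : (0:ℝ) < 1 + a * t := by nlinarith
  have hqt : q t = a / (1 + a * t) := by
    rw [eq_div_iff (ne_of_gt h1at)]
    linear_combination hP0 t ⟨ht.le, le_rfl⟩
  have hpxx : px w t x = a / (1 + a * t) := by
    rw [← hyx]; exact hqt
  rw [hpxx]
  refine ⟨div_pos ha0 h1at, le_min ?_ ?_⟩
  · have h1 : a / (1 + a * t) ≤ a := by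
      apply div_le_self ha0.le
      nlinarith
    exact h1.trans haM
  · rw [div_le_div_iff₀ h1at ht]
    nlinarith
end

section
/- Fix A > 0, ε > 0 and ξ ∈ ℝ, and set a(ξ) = εξ² + 1. Suppose n̂, û : [0,∞) → ℂ are differentiable and satisfy n̂′(t) = −iξ û(t) and û′(t) = −A iξ n̂(t) + iξ φ̂(t) − ξ² û(t), where φ̂(t) = −n̂(t)/a(ξ). Then for all t ≥ 0, d/dt [ (A + 1/a(ξ)) |n̂(t)|² + |û(t)|² ] = −2ξ² |û(t)|². -/
open Complex

private lemma hasDerivAt_normSq_comp {f : ℝ → ℂ} {f' : ℂ} {t : ℝ}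
    (hf : HasDerivAt f f' t) :
    HasDerivAt (fun s => Complex.normSq (f s))
      (2 * ((starRingEnd ℂ) (f t) * f').re) t := by
  have hre : HasDerivAt (fun s => (f s).re) f'.re t :=
    (Complex.reCLM.hasFDerivAt.comp_hasDerivAt t hf)
  have him : HasDerivAt (fun s => (f s).im) f'.im t :=
    (Complex.imCLM.hasFDerivAt.comp_hasDerivAt t hf)
  have h := (hre.mul hre).add (him.mul him)
  have heq : (fun s => (f s).re * (f s).re + (f s).im * (f s).im)
      = fun s => Complex.normSq (f s) := by
    funext s; simp [Complex.normSq_apply]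
  simp only [Pi.add_def, Pi.mul_def] at h
  rw [heq] at h
  refine h.congr_deriv ?_
  simp [Complex.mul_re]
  ring

/-- Energy identity for the Fourier-transformed linearized one-fluid
Navier–Stokes–Poisson system: `d/dt [(A + 1/a(ξ))|n̂|² + |û|²] = −2ξ²|û|²`. -/
theorem linearized_nsp_energy_identity (A ε ξ : ℝ) (hA : 0 < A) (hε : 0 < ε)
    (a : ℝ) (ha : a = ε * ξ ^ 2 + 1)
    (nh uh : ℝ → ℂ)
    (hn : ∀ t : ℝ, 0 ≤ t → HasDerivAt nh (-(Complex.I * (ξ : ℂ)) * uh t) t)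
    (hu : ∀ t : ℝ, 0 ≤ t → HasDerivAt uh
      (-((A : ℂ) * Complex.I * (ξ : ℂ)) * nh t + Complex.I * (ξ : ℂ) * (-(nh t) / (a : ℂ))
        - (ξ : ℂ) ^ 2 * uh t) t) :
    ∀ t : ℝ, 0 ≤ t →
      HasDerivAt (fun s => (A + 1 / a) * Complex.normSq (nh s) + Complex.normSq (uh s))
        (-2 * ξ ^ 2 * Complex.normSq (uh t)) t := by
  intro t ht
  have ha0 : a ≠ 0 := by rw [ha]; positivity
  have Hn := (hasDerivAt_normSq_comp (hn t ht)).const_mul (A + 1 / a)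
  have Hu := hasDerivAt_normSq_comp (hu t ht)
  have h := Hn.add Hu
  refine h.congr_deriv ?_
  have hx : ((ξ:ℂ))^2 = ((ξ^2 : ℝ) : ℂ) := by push_cast; ring
  rw [hx]
  simp [Complex.normSq_apply, Complex.mul_re, Complex.mul_im, Complex.div_re,
    Complex.div_im, Complex.normSq_ofReal]
  field_simp
  simp only [← Complex.ofReal_pow, Complex.ofReal_re]
  ring
end

section
/- Fix A > 0. There exists a constant C > 0 depending only on A such that for every ε > 0, every ξ ∈ ℝ and every differentiable pair n̂, û : [0,∞) → ℂ satisfying n̂′ = −iξû, û′ = −Aiξn̂ + iξφ̂ − ξ²û with φ̂ = −n̂/a(ξ) and a(ξ) = εξ² + 1, one has for all t ≥ 0: d/dt [ Re( iξ n̂(t) · conj(û(t)) ) / (1+ξ²) ] + (ξ²/(2(1+ξ²))) (A + 1/a(ξ)) |n̂(t)|² ≤ C ξ² |û(t)|². -/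
open Complex

private lemma nsp_cross_aux (A b ξ n1 n2 v1 v2 : ℝ) (hA : 0 < A) (hb : 0 ≤ b) :
    2 * A * ((ξ ^ 2 * (v1 ^ 2 + v2 ^ 2) - ξ ^ 2 * (A + b) * (n1 ^ 2 + n2 ^ 2)
        + ξ ^ 3 * (n2 * v1 - n1 * v2)) * 2
      + ξ ^ 2 * (A + b) * (n1 ^ 2 + n2 ^ 2))
    ≤ (2 * A + 1) * ξ ^ 2 * (v1 ^ 2 + v2 ^ 2) * (2 * (1 + ξ ^ 2)) := by
  nlinarith [sq_nonneg (A * ξ * n2 - ξ ^ 2 * v1), sq_nonneg (A * ξ * n1 + ξ ^ 2 * v2),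
    mul_nonneg (mul_nonneg hA.le (mul_nonneg (sq_nonneg ξ) hb))
      (by positivity : (0:ℝ) ≤ n1 ^ 2 + n2 ^ 2),
    mul_nonneg (mul_nonneg hA.le (mul_nonneg (sq_nonneg ξ) (sq_nonneg ξ)))
      (by positivity : (0:ℝ) ≤ v1 ^ 2 + v2 ^ 2),
    mul_nonneg (sq_nonneg ξ) (by positivity : (0:ℝ) ≤ v1 ^ 2 + v2 ^ 2),
    mul_nonneg (mul_nonneg (sq_nonneg ξ) (sq_nonneg ξ))
      (by positivity : (0:ℝ) ≤ v1 ^ 2 + v2 ^ 2)]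

/-- Cross-term estimate for the Fourier-transformed linearized one-fluid
Navier–Stokes–Poisson system: there is `C = C(A) > 0` such that
`d/dt [Re(iξ n̂ conj(û))/(1+ξ²)] + (ξ²/(2(1+ξ²)))(A + 1/a(ξ))|n̂|² ≤ C ξ² |û|²`. -/
theorem linearized_nsp_cross_term_estimate (A : ℝ) (hA : 0 < A) :
    ∃ C : ℝ, 0 < C ∧
      ∀ ε ξ : ℝ, 0 < ε → ∀ a : ℝ, a = ε * ξ ^ 2 + 1 →
        ∀ nh uh : ℝ → ℂ,
          (∀ t : ℝ, 0 ≤ t → HasDerivAt nh (-(Complex.I * (ξ : ℂ)) * uh t) t) →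
          (∀ t : ℝ, 0 ≤ t → HasDerivAt uh
            (-((A : ℂ) * Complex.I * (ξ : ℂ)) * nh t
              + Complex.I * (ξ : ℂ) * (-(nh t) / (a : ℂ)) - (ξ : ℂ) ^ 2 * uh t) t) →
          ∀ t : ℝ, 0 ≤ t →
            ∃ d : ℝ,
              HasDerivAt
                (fun s => (Complex.I * (ξ : ℂ) * nh s * (starRingEnd ℂ) (uh s)).re / (1 + ξ ^ 2))
                d t ∧
              d + ξ ^ 2 / (2 * (1 + ξ ^ 2)) * (A + 1 / a) * Complex.normSq (nh t)
                ≤ C * ξ ^ 2 * Complex.normSq (uh t) := by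
  refine ⟨1 + 1 / (2 * A), by positivity, ?_⟩
  intro ε ξ hε a ha nh uh hn hu t ht
  have ha1 : 1 ≤ a := by nlinarith [sq_nonneg ξ]
  have ha0 : (0:ℝ) < a := by linarith
  have hS : (0:ℝ) < 1 + ξ ^ 2 := by positivity
  set u' : ℂ := -((A : ℂ) * Complex.I * (ξ : ℂ)) * nh t
      + Complex.I * (ξ : ℂ) * (-(nh t) / (a : ℂ)) - (ξ : ℂ) ^ 2 * uh t with hu'
  have h1 : HasDerivAt (fun s => Complex.I * (ξ : ℂ) * nh s)
      (Complex.I * (ξ : ℂ) * (-(Complex.I * (ξ : ℂ)) * uh t)) t := (hn t ht).const_mul _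
  have h2 : HasDerivAt (fun s => (starRingEnd ℂ) (uh s)) ((starRingEnd ℂ) u') t := by
    have := (hu t ht).star
    simp only [← hu', ← starRingEnd_apply] at this
    exact this
  have hF := h1.mul h2
  have hre := (Complex.reCLM.hasFDerivAt.comp_hasDerivAt t hF)
  have hd := hre.div_const (1 + ξ ^ 2)
  simp only [Function.comp_def, Complex.reCLM_apply] at hd
  refine ⟨_, hd, ?_⟩
  · set n1 := (nh t).re with hn1
    set n2 := (nh t).im with hn2
    set v1 := (uh t).re with hv1
    set v2 := (uh t).im with hv2
    have hP : (Complex.I * (ξ : ℂ) * (-(Complex.I * (ξ : ℂ)) * uh t) * (starRingEnd ℂ) (uh t)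
          + Complex.I * (ξ : ℂ) * nh t * (starRingEnd ℂ) u').re
        = ξ ^ 2 * (v1 ^ 2 + v2 ^ 2) - ξ ^ 2 * (A + 1 / a) * (n1 ^ 2 + n2 ^ 2)
          + ξ ^ 3 * (n2 * v1 - n1 * v2) := by
      have e2 : ((ξ:ℂ) ^ 2).re = ξ ^ 2 := by
        simp [pow_two, Complex.mul_re]
      have e3 : ((ξ:ℂ) ^ 2).im = 0 := by
        simp [pow_two, Complex.mul_im]
      simp only [hu']
      simp [Complex.add_re, Complex.sub_re, Complex.mul_re, Complex.mul_im,
        Complex.div_re, Complex.div_im, Complex.normSq_apply, e2, e3, hn1, hn2, hv1, hv2]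
      field_simp
      ring
    rw [hP]
    have hN : Complex.normSq (nh t) = n1 ^ 2 + n2 ^ 2 := by
      simp [Complex.normSq_apply, hn1, hn2]; ring
    have hU : Complex.normSq (uh t) = v1 ^ 2 + v2 ^ 2 := by
      simp [Complex.normSq_apply]; ring
    rw [hN, hU]
    have e1 : (ξ ^ 2 * (v1 ^ 2 + v2 ^ 2) - ξ ^ 2 * (A + 1 / a) * (n1 ^ 2 + n2 ^ 2)
          + ξ ^ 3 * (n2 * v1 - n1 * v2)) / (1 + ξ ^ 2)
        + ξ ^ 2 / (2 * (1 + ξ ^ 2)) * (A + 1 / a) * (n1 ^ 2 + n2 ^ 2)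
        = ((ξ ^ 2 * (v1 ^ 2 + v2 ^ 2) - ξ ^ 2 * (A + 1 / a) * (n1 ^ 2 + n2 ^ 2)
          + ξ ^ 3 * (n2 * v1 - n1 * v2)) * 2
          + ξ ^ 2 * (A + 1 / a) * (n1 ^ 2 + n2 ^ 2)) / (2 * (1 + ξ ^ 2)) := by
      field_simp
    rw [e1, div_le_iff₀ (by positivity)]
    have h2A : (0:ℝ) < 2 * A := by positivity
    rw [← mul_le_mul_iff_right₀ h2A]
    have hc : 2 * A * ((1 + 1 / (2 * A)) * ξ ^ 2 * (v1 ^ 2 + v2 ^ 2) * (2 * (1 + ξ ^ 2)))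
        = (2 * A + 1) * ξ ^ 2 * (v1 ^ 2 + v2 ^ 2) * (2 * (1 + ξ ^ 2)) := by
      field_simp
    rw [hc]
    have hinv : (0:ℝ) ≤ 1 / a := by positivity
    exact nsp_cross_aux A (1 / a) ξ n1 n2 v1 v2 hA hinv
end

section
/- Fix A > 0. There exist constants κ > 0 and λ > 0 depending only on A such that for every ε > 0, every ξ ∈ ℝ and every differentiable pair n̂, û : [0,∞) → ℂ satisfying n̂′ = −iξû, û′ = −Aiξn̂ + iξφ̂ − ξ²û with φ̂ = −n̂/a(ξ) and a(ξ) = εξ² + 1, the energy E(t) := (A + 1/a(ξ)) |n̂(t)|² + |û(t)|² + κ · Re( iξ n̂(t) · conj(û(t)) ) / (1+ξ²) satisfies E(t) ≤ exp( −λ ξ² t / (1+ξ²) ) · E(0) for all t ≥ 0; moreover E(t) is comparable to (A + 1/a(ξ))|n̂(t)|² + |û(t)|² uniformly in ξ and ε. -/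
open Complex

/-- The modified energy for the Fourier-transformed linearized system at frequency `ξ`. -/
noncomputable def linE (A a κ ξ : ℝ) (z w : ℂ) : ℝ :=
  (A + 1 / a) * Complex.normSq z + Complex.normSq w
    + κ * (Complex.I * (ξ : ℂ) * z * (starRingEnd ℂ) w).re / (1 + ξ ^ 2)

/-- The natural energy for the Fourier-transformed linearized system. -/
noncomputable def linG (A a : ℝ) (z w : ℂ) : ℝ :=
  (A + 1 / a) * Complex.normSq z + Complex.normSq w

lemma hasDerivAt_conj' {g : ℝ → ℂ} {g' : ℂ} {t : ℝ} (hg : HasDerivAt g g' t) :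
    HasDerivAt (fun t => (starRingEnd ℂ) (g t)) ((starRingEnd ℂ) g') t := by
  simpa [Function.comp_def] using (Complex.conjCLE.toContinuousLinearMap.hasFDerivAt.comp_hasDerivAt t hg)

lemma hasDerivAt_re' {g : ℝ → ℂ} {g' : ℂ} {t : ℝ} (hg : HasDerivAt g g' t) :
    HasDerivAt (fun t => (g t).re) (g'.re) t := by
  simpa [Function.comp_def] using (Complex.reCLM.hasFDerivAt.comp_hasDerivAt t hg)

lemma hasDerivAt_normSq' {g : ℝ → ℂ} {g' : ℂ} {t : ℝ} (hg : HasDerivAt g g' t) :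
    HasDerivAt (fun t => Complex.normSq (g t))
      ((g' * (starRingEnd ℂ) (g t) + g t * (starRingEnd ℂ) g').re) t := by
  have h := hasDerivAt_re' (hg.mul (hasDerivAt_conj' hg))
  simpa only [Pi.mul_apply, Complex.mul_conj, Complex.ofReal_re] using h

lemma hasDerivAt_linE (A a κ ξ : ℝ) (nh uh : ℝ → ℂ) (n' u' : ℂ) (t : ℝ)
    (hn : HasDerivAt nh n' t) (hu : HasDerivAt uh u' t) :
    HasDerivAt (fun t => linE A a κ ξ (nh t) (uh t))
      ((A + 1/a) * (n' * (starRingEnd ℂ) (nh t) + nh t * (starRingEnd ℂ) n').re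
        + (u' * (starRingEnd ℂ) (uh t) + uh t * (starRingEnd ℂ) u').re
        + κ * (Complex.I * (ξ:ℂ) * n' * (starRingEnd ℂ) (uh t)
            + Complex.I * (ξ:ℂ) * nh t * (starRingEnd ℂ) u').re / (1+ξ^2)) t := by
  have h1 := (hasDerivAt_normSq' hn).const_mul (A + 1/a)
  have h2 := hasDerivAt_normSq' hu
  have h3 := hasDerivAt_re' (((hn.const_mul (Complex.I * (ξ:ℂ))).mul (hasDerivAt_conj' hu)))
  have h4 := (h3.const_mul κ).div_const (1+ξ^2)
  have := (h1.add h2).add h4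
  simpa [linE, Pi.add_def, mul_assoc, mul_comm, mul_left_comm, add_assoc] using this

/-- Key pointwise decay inequality. -/
lemma key_decay (A κ B ξ N U M : ℝ) (hA : 0 < A) (hκ0 : 0 < κ) (hκA : κ ≤ A)
    (hκ1 : κ ≤ 1) (hB : A ≤ B) (hN : 0 ≤ N) (hU : 0 ≤ U)
    (hM2 : -(2*B*M) ≤ B^2*N + ξ^2*U) :
    (κ/2)*ξ^2/(1+ξ^2) * (B*N + U + κ*M/(1+ξ^2))
      + (-(2*ξ^2*U) + κ*(ξ^2*U - B*ξ^2*N - ξ^2*M)/(1+ξ^2)) ≤ 0 := by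
  set s := ξ^2 with hs
  have hs0 : 0 ≤ s := sq_nonneg ξ
  set q := 1 + s with hqdef
  have hq : 0 < q := by positivity
  have hB0 : 0 < B := lt_of_lt_of_le hA hB
  have hc : 0 ≤ κ*(q - κ/2) := by nlinarith
  have hscaled : s*(κ*(q-κ/2))*(-(2*B*M)) ≤ s*(κ*(q-κ/2))*(B^2*N+s*U) :=
    mul_le_mul_of_nonneg_left hM2 (mul_nonneg hs0 hc)
  have hx1 : 0 ≤ s*U*q*((1-κ)*B) := by
    apply mul_nonneg (mul_nonneg (mul_nonneg hs0 hU) hq.le)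
    apply mul_nonneg (by linarith) hB0.le
  have hx2 : 0 ≤ s*U*q*(s*(B-κ)) := by
    apply mul_nonneg (mul_nonneg (mul_nonneg hs0 hU) hq.le)
    apply mul_nonneg hs0 (by linarith)
  have hx3 : 0 ≤ s*U*q*B := by positivity
  have hx4 : 0 ≤ s*U*q*(s*B) := by positivity
  have hx5 : 0 ≤ s*N*B^2*κ^2 := by positivity
  have hx6 : 0 ≤ s*U*κ^2*s := by positivity
  have hP2 : s * (-(κ*q*B^2*N) + 2*B*q*(3*κ/2 - 2*q)*U + 2*B*κ*(κ/2 - q)*M) ≤ 0 := by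
    nlinarith [hscaled, hx1, hx2, hx3, hx4, hx5, hx6]
  have heq : (κ/2)*s/q * (B*N + U + κ*M/q)
      + (-(2*s*U) + κ*(s*U - B*s*N - s*M)/q)
      = s * (-(κ*q*B^2*N) + 2*B*q*(3*κ/2 - 2*q)*U + 2*B*κ*(κ/2 - q)*M) / (2*B*q^2) := by
    field_simp
    ring
  rw [heq]
  exact div_nonpos_of_nonpos_of_nonneg hP2 (by positivity)

lemma comp_bound (A κ B ξ zr zi wr wi : ℝ) (hA : 0 < A) (hκ0 : 0 < κ)
    (hκA : 2*κ ≤ A) (hκ1 : 2*κ ≤ 1) (hB : A ≤ B) :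
    |κ * (ξ*(zr*wi - zi*wr))|
      ≤ (1/2)*((B*(zr^2+zi^2)+(wr^2+wi^2))*(1+ξ^2)) := by
  have hB0 : 0 < B := lt_of_lt_of_le hA hB
  rw [abs_le]
  constructor
  · nlinarith [mul_nonneg hκ0.le (sq_nonneg (ξ*zr + wi)), mul_nonneg hκ0.le (sq_nonneg (ξ*zi - wr)),
      mul_nonneg (sub_nonneg.2 hB) (mul_nonneg (sq_nonneg ξ) (by positivity : (0:ℝ) ≤ zr^2+zi^2)),
      mul_nonneg (by linarith : (0:ℝ) ≤ A - 2*κ) (mul_nonneg (sq_nonneg ξ) (by positivity : (0:ℝ) ≤ zr^2+zi^2)),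
      mul_nonneg (by linarith : (0:ℝ) ≤ 1 - 2*κ) (by positivity : (0:ℝ) ≤ wr^2+wi^2),
      mul_nonneg hB0.le (by positivity : (0:ℝ) ≤ zr^2+zi^2),
      mul_nonneg (sq_nonneg ξ) (by positivity : (0:ℝ) ≤ wr^2+wi^2)]
  · nlinarith [mul_nonneg hκ0.le (sq_nonneg (ξ*zr - wi)), mul_nonneg hκ0.le (sq_nonneg (ξ*zi + wr)),
      mul_nonneg (sub_nonneg.2 hB) (mul_nonneg (sq_nonneg ξ) (by positivity : (0:ℝ) ≤ zr^2+zi^2)),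
      mul_nonneg (by linarith : (0:ℝ) ≤ A - 2*κ) (mul_nonneg (sq_nonneg ξ) (by positivity : (0:ℝ) ≤ zr^2+zi^2)),
      mul_nonneg (by linarith : (0:ℝ) ≤ 1 - 2*κ) (by positivity : (0:ℝ) ≤ wr^2+wi^2),
      mul_nonneg hB0.le (by positivity : (0:ℝ) ≤ zr^2+zi^2),
      mul_nonneg (sq_nonneg ξ) (by positivity : (0:ℝ) ≤ wr^2+wi^2)]

/-- Dissipative decay of the linearized one-fluid Navier–Stokes–Poisson system in Fourier
variables: there exist `κ, λ > 0` (depending only on `A`) such that the modified energy `E`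
satisfies `E(t) ≤ e^{−λξ²t/(1+ξ²)} E(0)` and `E` is comparable with
`(A + 1/a(ξ))|n̂|² + |û|²` uniformly in `ξ` and `ε`. -/
theorem linearized_nsp_decay (A : ℝ) (hA : 0 < A) :
    ∃ κ lam c₁ c₂ : ℝ, 0 < κ ∧ 0 < lam ∧ 0 < c₁ ∧ 0 < c₂ ∧
      ∀ ε ξ : ℝ, 0 < ε → ∀ a : ℝ, a = ε * ξ ^ 2 + 1 →
        ∀ nh uh : ℝ → ℂ,
          (∀ t : ℝ, 0 ≤ t → HasDerivAt nh (-(Complex.I * (ξ : ℂ)) * uh t) t) →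
          (∀ t : ℝ, 0 ≤ t → HasDerivAt uh
            (-((A : ℂ) * Complex.I * (ξ : ℂ)) * nh t
              + Complex.I * (ξ : ℂ) * (-(nh t) / (a : ℂ)) - (ξ : ℂ) ^ 2 * uh t) t) →
          (∀ t : ℝ, 0 ≤ t →
            linE A a κ ξ (nh t) (uh t)
              ≤ Real.exp (-lam * ξ ^ 2 * t / (1 + ξ ^ 2)) * linE A a κ ξ (nh 0) (uh 0)) ∧
          (∀ t : ℝ, 0 ≤ t →
            c₁ * linG A a (nh t) (uh t) ≤ linE A a κ ξ (nh t) (uh t) ∧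
            linE A a κ ξ (nh t) (uh t) ≤ c₂ * linG A a (nh t) (uh t)) := by
  have hm : 0 < min A 1 := lt_min hA one_pos
  refine ⟨min A 1 / 2, min A 1 / 4, 1/2, 3/2, by positivity, by positivity, by norm_num,
    by norm_num, ?_⟩
  intro ε ξ hε a ha nh uh hn hu
  set κ := min A 1 / 2 with hκdef
  have hκ0 : 0 < κ := by positivity
  have hκA : 2*κ ≤ A := by
    have := min_le_left A 1; rw [hκdef]; linarith
  have hκ1 : 2*κ ≤ 1 := by
    have := min_le_right A 1; rw [hκdef]; linarith
  have hκA' : κ ≤ A := by linarith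
  have hκ1' : κ ≤ 1 := by linarith
  have ha1 : 1 ≤ a := by
    rw [ha]; nlinarith [mul_nonneg hε.le (sq_nonneg ξ)]
  have ha0 : 0 < a := by linarith
  set B := A + 1/a with hBdef
  have hAB : A ≤ B := by
    rw [hBdef]; have : 0 < 1/a := by positivity
    linarith
  have hB0 : 0 < B := lt_of_lt_of_le hA hAB
  have haC : (a:ℂ) ≠ 0 := by
    exact_mod_cast ha0.ne'
  have hq : (0:ℝ) < 1 + ξ^2 := by positivity
  -- rewrite the velocity equation
  have hu' : ∀ t : ℝ, 0 ≤ t →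
      HasDerivAt uh (-((B:ℂ)*Complex.I*(ξ:ℂ))*nh t - (ξ:ℂ)^2*uh t) t := by
    intro t ht
    have h := hu t ht
    have heq : -((A:ℂ) * Complex.I * (ξ:ℂ)) * nh t
        + Complex.I * (ξ:ℂ) * (-(nh t) / (a:ℂ)) - (ξ:ℂ)^2 * uh t
        = -((B:ℂ)*Complex.I*(ξ:ℂ))*nh t - (ξ:ℂ)^2*uh t := by
      rw [hBdef]; push_cast; field_simp; ring
    rwa [heq] at h
  -- the energy and its derivative
  set E : ℝ → ℝ := fun t => linE A a κ ξ (nh t) (uh t) with hEdef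
  set D : ℝ → ℝ := fun t => -(2*ξ^2*Complex.normSq (uh t))
      + κ*(ξ^2*Complex.normSq (uh t) - B*ξ^2*Complex.normSq (nh t)
          - ξ^2*(ξ*((nh t).re*(uh t).im - (nh t).im*(uh t).re)))/(1+ξ^2) with hDdef
  have hE : ∀ t : ℝ, 0 ≤ t → HasDerivAt E (D t) t := by
    intro t ht
    have h := hasDerivAt_linE A a κ ξ nh uh _ _ t (hn t ht) (hu' t ht)
    have hval : (A + 1/a) * ((-(Complex.I * (ξ:ℂ)) * uh t) * (starRingEnd ℂ) (nh t)
          + nh t * (starRingEnd ℂ) (-(Complex.I * (ξ:ℂ)) * uh t)).re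
        + ((-((B:ℂ)*Complex.I*(ξ:ℂ))*nh t - (ξ:ℂ)^2*uh t) * (starRingEnd ℂ) (uh t)
          + uh t * (starRingEnd ℂ) (-((B:ℂ)*Complex.I*(ξ:ℂ))*nh t - (ξ:ℂ)^2*uh t)).re
        + κ * (Complex.I * (ξ:ℂ) * (-(Complex.I * (ξ:ℂ)) * uh t) * (starRingEnd ℂ) (uh t)
          + Complex.I * (ξ:ℂ) * nh t * (starRingEnd ℂ)
              (-((B:ℂ)*Complex.I*(ξ:ℂ))*nh t - (ξ:ℂ)^2*uh t)).re / (1+ξ^2)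
        = D t := by
      rw [hDdef, hBdef]
      simp only [Complex.normSq_apply, pow_two, Complex.mul_re, Complex.mul_im, Complex.add_re,
        Complex.add_im, Complex.sub_re, Complex.sub_im, Complex.neg_re, Complex.neg_im,
        Complex.I_re, Complex.I_im, Complex.ofReal_re, Complex.ofReal_im,
        Complex.conj_re, Complex.conj_im]
      ring
    rw [← hval]
    exact h
  -- pointwise differential inequality
  have h0 : ∀ t : ℝ, 0 ≤ t → (min A 1 / 4) * ξ^2 / (1+ξ^2) * E t + D t ≤ 0 := by
    intro t ht
    have hM2 : -(2*B*(ξ*((nh t).re*(uh t).im - (nh t).im*(uh t).re)))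
        ≤ B^2*Complex.normSq (nh t) + ξ^2*Complex.normSq (uh t) := by
      simp only [Complex.normSq_apply]
      nlinarith [sq_nonneg (B*(nh t).re + ξ*(uh t).im), sq_nonneg (B*(nh t).im - ξ*(uh t).re)]
    have key := key_decay A κ B ξ (Complex.normSq (nh t)) (Complex.normSq (uh t))
      (ξ*((nh t).re*(uh t).im - (nh t).im*(uh t).re)) hA hκ0 hκA' hκ1' hAB
      (Complex.normSq_nonneg _) (Complex.normSq_nonneg _) hM2
    have hEt : E t = B*Complex.normSq (nh t) + Complex.normSq (uh t)
        + κ*(ξ*((nh t).re*(uh t).im - (nh t).im*(uh t).re))/(1+ξ^2) := by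
      rw [hEdef]
      simp only [linE, hBdef, Complex.mul_re, Complex.mul_im, Complex.I_re, Complex.I_im,
        Complex.ofReal_re, Complex.ofReal_im, Complex.conj_re, Complex.conj_im]
      ring
    have hlam : min A 1 / 4 = κ/2 := by rw [hκdef]; ring
    rw [hEt, hlam]
    exact key
  -- Gronwall via antitonicity
  set r := (min A 1 / 4) * ξ^2 / (1+ξ^2) with hrdef
  set F : ℝ → ℝ := fun t => Real.exp (r*t) * E t with hFdef
  have hF : ∀ t : ℝ, 0 ≤ t →
      HasDerivAt F (Real.exp (r*t) * r * E t + Real.exp (r*t) * D t) t := by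
    intro t ht
    have h1 : HasDerivAt (fun t : ℝ => Real.exp (r*t)) (Real.exp (r*t) * r) t := by
      simpa using ((hasDerivAt_id t).const_mul r).exp
    exact h1.mul (hE t ht)
  have hkey : ∀ t : ℝ, 0 ≤ t →
      Real.exp (r*t) * r * E t + Real.exp (r*t) * D t ≤ 0 := by
    intro t ht
    have h := h0 t ht
    have : Real.exp (r*t) * r * E t + Real.exp (r*t) * D t
        = Real.exp (r*t) * (r * E t + D t) := by ring
    rw [this]
    exact mul_nonpos_of_nonneg_of_nonpos (Real.exp_pos _).le h
  have hFanti : AntitoneOn F (Set.Ici (0:ℝ)) := by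
    apply antitoneOn_of_deriv_nonpos (convex_Ici 0)
    · intro t ht
      exact (hF t ht).continuousAt.continuousWithinAt
    · intro t ht
      rw [interior_Ici] at ht
      exact ((hF t (le_of_lt ht)).differentiableAt).differentiableWithinAt
    · intro t ht
      rw [interior_Ici] at ht
      rw [(hF t ht.le).deriv]
      exact hkey t ht.le
  constructor
  · intro t ht
    have hFt : F t ≤ F 0 := hFanti Set.self_mem_Ici (Set.mem_Ici.2 ht) ht
    have hF0 : F 0 = E 0 := by rw [hFdef]; simp
    have hFt' : Real.exp (r*t) * E t ≤ E 0 := by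
      rw [hFdef] at hFt; rw [← hF0]; exact hFt
    have hexp : -(min A 1 / 4) * ξ^2 * t / (1+ξ^2) = -(r*t) := by
      rw [hrdef]; ring
    show E t ≤ Real.exp (-(min A 1 / 4) * ξ^2 * t / (1+ξ^2)) * E 0
    rw [hexp, Real.exp_neg]
    rw [inv_mul_eq_div, le_div_iff₀ (Real.exp_pos _)]
    calc E t * Real.exp (r*t) = Real.exp (r*t) * E t := by ring
      _ ≤ E 0 := hFt'
  · intro t ht
    have hcross := comp_bound A κ B ξ (nh t).re (nh t).im (uh t).re (uh t).im
      hA hκ0 hκA hκ1 hAB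
    have hEt : E t = linG A a (nh t) (uh t)
        + κ*(ξ*((nh t).re*(uh t).im - (nh t).im*(uh t).re))/(1+ξ^2) := by
      rw [hEdef]
      simp only [linE, linG, Complex.mul_re, Complex.mul_im, Complex.I_re, Complex.I_im,
        Complex.ofReal_re, Complex.ofReal_im, Complex.conj_re, Complex.conj_im]
      ring
    have hGt : linG A a (nh t) (uh t)
        = B*((nh t).re^2+(nh t).im^2) + ((uh t).re^2+(uh t).im^2) := by
      simp only [linG, hBdef, Complex.normSq_apply]
      ring
    have habs : |κ*(ξ*((nh t).re*(uh t).im - (nh t).im*(uh t).re))|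
        ≤ (1/2) * (linG A a (nh t) (uh t) * (1+ξ^2)) := by
      rw [hGt]
      exact hcross
    have h1 : κ*(ξ*((nh t).re*(uh t).im - (nh t).im*(uh t).re))
        ≤ (1/2) * (linG A a (nh t) (uh t) * (1+ξ^2)) := le_trans (le_abs_self _) habs
    have h2 : -((1/2) * (linG A a (nh t) (uh t) * (1+ξ^2)))
        ≤ κ*(ξ*((nh t).re*(uh t).im - (nh t).im*(uh t).re)) := by
      have := neg_abs_le (κ*(ξ*((nh t).re*(uh t).im - (nh t).im*(uh t).re)))
      linarith
    constructor
    · show (1:ℝ)/2 * linG A a (nh t) (uh t) ≤ E t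
      rw [hEt]
      have h3 : -((1:ℝ)/2 * linG A a (nh t) (uh t))
          ≤ κ*(ξ*((nh t).re*(uh t).im - (nh t).im*(uh t).re))/(1+ξ^2) := by
        rw [le_div_iff₀ hq]
        nlinarith [h2]
      linarith
    · show E t ≤ (3:ℝ)/2 * linG A a (nh t) (uh t)
      rw [hEt]
      have : κ*(ξ*((nh t).re*(uh t).im - (nh t).im*(uh t).re))/(1+ξ^2)
          ≤ (1/2) * linG A a (nh t) (uh t) := by
        rw [div_le_iff₀ hq]
        calc κ*(ξ*((nh t).re*(uh t).im - (nh t).im*(uh t).re))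
            ≤ (1/2) * (linG A a (nh t) (uh t) * (1+ξ^2)) := h1
          _ = (1/2) * linG A a (nh t) (uh t) * (1+ξ^2) := by ring
      linarith
end

section
/- If f : ℝ → ℝ is continuously differentiable, f and f′ are square integrable on ℝ, and f(x) → 0 as |x| → ∞, then ∫_ℝ f(x)⁴ dx ≤ 2 · ‖f‖_{L²(ℝ)}³ · ‖f′‖_{L²(ℝ)}. -/
open MeasureTheory Filter

/-- If `f` is continuously differentiable, `f` and `f'` are square integrable on `ℝ` and
`f` vanishes at infinity, then `∫ f⁴ ≤ 2 ‖f‖_{L²}³ ‖f'‖_{L²}`. -/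
theorem integral_pow_four_le (f : ℝ → ℝ)
    (hf : ContDiff ℝ 1 f)
    (hf2 : Integrable (fun x => (f x) ^ 2))
    (hdf2 : Integrable (fun x => (deriv f x) ^ 2))
    (htop : Tendsto f atTop (nhds 0))
    (hbot : Tendsto f atBot (nhds 0)) :
    (∫ x, (f x) ^ 4) ≤
      2 * (∫ x, (f x) ^ 2) ^ ((3 : ℝ) / 2) * (∫ x, (deriv f x) ^ 2) ^ ((1 : ℝ) / 2) := by
  have hfc : Continuous f := hf.continuous
  have hdc : Continuous (deriv f) := hf.continuous_deriv le_rfl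
  set g : ℝ → ℝ := fun x => f x * deriv f x with hg_def
  have hgc : Continuous g := hfc.mul hdc
  -- integrability of f f'
  have hg_int : Integrable g := by
    refine ((hf2.add hdf2).div_const 2).mono hgc.aestronglyMeasurable ?_
    refine Filter.Eventually.of_forall fun x => ?_
    simp only [Real.norm_eq_abs, Pi.add_apply]
    rw [abs_of_nonneg (by positivity : (0:ℝ) ≤ (f x ^ 2 + deriv f x ^ 2) / 2)]
    rw [hg_def, abs_mul]
    nlinarith [sq_nonneg (|f x| - |deriv f x|), sq_abs (f x), sq_abs (deriv f x),
      abs_nonneg (f x), abs_nonneg (deriv f x)]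
  set M : ℝ := 2 * ∫ t, |g t| with hM_def
  have hInonneg : 0 ≤ ∫ t, |g t| := integral_nonneg fun t => abs_nonneg _
  -- pointwise bound f x ^ 2 ≤ M
  have hbound : ∀ x, f x ^ 2 ≤ M := by
    intro x
    have hderiv : ∀ t, HasDerivAt (fun y => f y ^ 2) (2 * g t) t := by
      intro t
      have h1 : HasDerivAt f (deriv f t) t := (hf.differentiable one_ne_zero t).hasDerivAt
      have := h1.fun_pow 2
      simpa [hg_def, mul_comm, mul_assoc, mul_left_comm] using this
    have hfc2 : Continuous fun t => 2 * g t := continuous_const.mul hgc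
    have key : ∀ y, ∫ t in y..x, 2 * g t = f x ^ 2 - f y ^ 2 := by
      intro y
      exact intervalIntegral.integral_eq_sub_of_hasDerivAt (fun t _ => hderiv t)
        (hfc2.intervalIntegrable y x)
    have h2g_int : Integrable (fun t => 2 * g t) := hg_int.const_mul 2
    have t1 : Tendsto (fun y => ∫ t in y..x, 2 * g t) atBot
        (nhds (∫ t in Set.Iic x, 2 * g t)) :=
      intervalIntegral_tendsto_integral_Iic x h2g_int.integrableOn tendsto_id
    have t2 : Tendsto (fun y => f x ^ 2 - f y ^ 2) atBot (nhds (f x ^ 2)) := by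
      simpa using tendsto_const_nhds.sub (hbot.pow 2)
    have heq : f x ^ 2 = ∫ t in Set.Iic x, 2 * g t := by
      refine tendsto_nhds_unique ?_ t1
      simpa [key] using t2
    rw [heq, hM_def]
    calc ∫ t in Set.Iic x, 2 * g t ≤ ∫ t in Set.Iic x, 2 * |g t| := by
          refine setIntegral_mono h2g_int.integrableOn
            ((hg_int.abs.const_mul 2).integrableOn) fun t => ?_
          have := le_abs_self (g t); linarith
      _ ≤ ∫ t, 2 * |g t| :=
          setIntegral_le_integral (hg_int.abs.const_mul 2)
            (Filter.Eventually.of_forall fun t => by positivity)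
      _ = 2 * ∫ t, |g t| := integral_const_mul 2 _
  -- Cauchy–Schwarz
  set A : ℝ := ∫ x, f x ^ 2 with hA_def
  set B : ℝ := ∫ x, deriv f x ^ 2 with hB_def
  have hA0 : 0 ≤ A := integral_nonneg fun x => sq_nonneg _
  have hB0 : 0 ≤ B := integral_nonneg fun x => sq_nonneg _
  have habs_rpow : ∀ a : ℝ, |a| ^ (2:ℝ) = a ^ 2 := fun a => by
    rw [show (2:ℝ) = ((2:ℕ):ℝ) by norm_num, Real.rpow_natCast, sq_abs]
  have hCS : (∫ t, |g t|) ≤ A ^ ((1:ℝ)/2) * B ^ ((1:ℝ)/2) := by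
    have hpq : Real.HolderConjugate 2 2 := Real.holderConjugate_iff.mpr ⟨one_lt_two, by norm_num⟩
    have hmf : MemLp f 2 volume :=
      (memLp_two_iff_integrable_sq hfc.aestronglyMeasurable).2 hf2
    have hmd : MemLp (deriv f) 2 volume :=
      (memLp_two_iff_integrable_sq hdc.aestronglyMeasurable).2 hdf2
    have h2 : ENNReal.ofReal (2:ℝ) = 2 := by
      rw [show (2:ℝ) = ((2:ℕ):ℝ) by norm_num, ENNReal.ofReal_natCast]; norm_num
    have habsf : MemLp (fun x => |f x|) (ENNReal.ofReal 2) volume := by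
      rw [h2]; simpa [Real.norm_eq_abs] using hmf.norm
    have habsd : MemLp (fun x => |deriv f x|) (ENNReal.ofReal 2) volume := by
      rw [h2]; simpa [Real.norm_eq_abs] using hmd.norm
    have := integral_mul_le_Lp_mul_Lq_of_nonneg hpq
      (Filter.Eventually.of_forall fun x => abs_nonneg (f x))
      (Filter.Eventually.of_forall fun x => abs_nonneg (deriv f x)) habsf habsd
    simpa [hg_def, abs_mul, habs_rpow, hA_def, hB_def] using this
  -- integrability of f^4 dominated by M f^2 and final chain
  have h4le : (∫ x, f x ^ 4) ≤ M * A := by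
    have : (∫ x, f x ^ 4) ≤ ∫ x, M * f x ^ 2 := by
      refine integral_mono_of_nonneg (Filter.Eventually.of_forall fun x => by positivity)
        (hf2.const_mul M) (Filter.Eventually.of_forall fun x => ?_)
      show f x ^ 4 ≤ M * f x ^ 2
      have h1 : f x ^ 4 = f x ^ 2 * f x ^ 2 := by ring
      rw [h1]
      exact mul_le_mul_of_nonneg_right (hbound x) (sq_nonneg _)
    simpa [integral_const_mul, hA_def] using this
  have hMA : M * A ≤ 2 * A ^ ((3:ℝ)/2) * B ^ ((1:ℝ)/2) := by
    have h1 : M * A ≤ 2 * (A ^ ((1:ℝ)/2) * B ^ ((1:ℝ)/2)) * A := by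
      rw [hM_def]
      have := mul_le_mul_of_nonneg_right hCS hA0
      nlinarith [this]
    have h2 : A ^ ((3:ℝ)/2) = A ^ ((1:ℝ)/2) * A := by
      rw [show (3:ℝ)/2 = (1:ℝ)/2 + 1 by norm_num,
        Real.rpow_add_of_nonneg hA0 (by norm_num) (by norm_num), Real.rpow_one]
    rw [h2]; nlinarith [h1]
  calc (∫ x, f x ^ 4) ≤ M * A := h4le
    _ ≤ 2 * A ^ ((3:ℝ)/2) * B ^ ((1:ℝ)/2) := hMA
end
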